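/- For every integer N ≥ 0, the dimension of FSh₂(N) as a ℚ-vector space equals 0 if N is even, and equals ⌊N/3⌋ + 1 if N is odd. -/

import Mathlib

noncomputable section

open MvPolynomial

/-- The polynomial ring `ℚ[X,Y]`, with `X = X 0` and `Y = X 1`. -/
abbrev R2 : Type := MvPolynomial (Fin 2) ℚ

/-- The field of rational functions `ℚ(X,Y)`. -/
abbrev K2 : Type := FractionRing R2

/-- The substitution `(X, Y) ↦ (X + Y, -Y)` on polynomials. -/
def fayA : R2 →ₐ[ℚ] R2 := aeval ![X 0 + X 1, -X 1]

/-- The substitution `(X, Y) ↦ (-X - Y, X)` on polynomials. -/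
def rotA : R2 →ₐ[ℚ] R2 := aeval ![-X 0 - X 1, X 0]

/-- The substitution `(X, Y) ↦ (Y, X)` on polynomials. -/
def swapA : R2 →ₐ[ℚ] R2 := aeval ![X 1, X 0]

lemma fayA_invol : fayA.comp fayA = AlgHom.id ℚ R2 := by
  apply algHom_ext
  intro i
  fin_cases i <;> simp [fayA]

lemma rotA_cube : rotA.comp (rotA.comp rotA) = AlgHom.id ℚ R2 := by
  apply algHom_ext
  intro i
  fin_cases i <;> simp [rotA]

lemma swapA_invol : swapA.comp swapA = AlgHom.id ℚ R2 := by
  apply algHom_ext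
  intro i
  fin_cases i <;> simp [swapA]

lemma fayA_inj : Function.Injective fayA :=
  Function.LeftInverse.injective (g := fayA) fun x => by
    simpa using DFunLike.congr_fun fayA_invol x

lemma rotA_inj : Function.Injective rotA :=
  Function.LeftInverse.injective (g := rotA.comp rotA) fun x => by
    simpa using DFunLike.congr_fun rotA_cube x

lemma swapA_inj : Function.Injective swapA :=
  Function.LeftInverse.injective (g := swapA) fun x => by
    simpa using DFunLike.congr_fun swapA_invol x

/-- Lift an injective substitution on `ℚ[X,Y]` to the fraction field `ℚ(X,Y)`. -/
def liftK (φ : R2 →ₐ[ℚ] R2) (hφ : Function.Injective φ) : K2 →+* K2 :=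
  IsFractionRing.lift (g := (algebraMap R2 K2).comp φ.toRingHom)
    (fun _ _ h => hφ (IsFractionRing.injective R2 K2 h))

/-- `P(X,Y) ↦ P(X+Y, -Y)` as a `ℚ`-linear endomorphism of `ℚ(X,Y)`. -/
def fayL : K2 →ₗ[ℚ] K2 := (liftK fayA fayA_inj).toAddMonoidHom.toRatLinearMap

/-- `P(X,Y) ↦ P(-X-Y, X)` as a `ℚ`-linear endomorphism of `ℚ(X,Y)`. -/
def rotL : K2 →ₗ[ℚ] K2 := (liftK rotA rotA_inj).toAddMonoidHom.toRatLinearMap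

/-- `P(X,Y) ↦ P(Y, X)` as a `ℚ`-linear endomorphism of `ℚ(X,Y)`. -/
def swapL : K2 →ₗ[ℚ] K2 := (liftK swapA swapA_inj).toAddMonoidHom.toRatLinearMap

/-- The inclusion `ℚ[X,Y] → ℚ(X,Y)` as a `ℚ`-linear map. -/
def algL : R2 →ₗ[ℚ] K2 := (algebraMap R2 K2).toAddMonoidHom.toRatLinearMap

/-- The element `X·Y ∈ ℚ(X,Y)`. -/
def xyK : K2 := algebraMap R2 K2 (X 0 * X 1)

/-- The length-two Fay-shuffle space `FSh₂(N)`: rational functions `P(X,Y)`,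
homogeneous of degree `N - 2` with at most simple poles along `X = 0` and `Y = 0`
and no other poles (equivalently, `X·Y·P` is a homogeneous polynomial of degree `N`),
satisfying the Fay relation `P(X,Y) + P(X+Y,-Y) + P(-X-Y,X) = 0` and the shuffle
relation `P(X,Y) + P(Y,X) = 0`. -/
def FSh (N : ℕ) : Submodule ℚ K2 :=
  (Submodule.map algL (homogeneousSubmodule (Fin 2) ℚ N)).comap (LinearMap.mulLeft ℚ xyK)
    ⊓ LinearMap.ker (LinearMap.id + fayL + rotL)
    ⊓ LinearMap.ker (LinearMap.id + swapL)


-- ========== auxiliary development ==========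

namespace FayAux

/-! ### The field `F = ℚ(ω)` with `ω² + ω + 1 = 0` -/

def cp : Polynomial ℚ := Polynomial.X ^ 2 + Polynomial.X + 1

lemma cp_eq_cyclotomic : cp = Polynomial.cyclotomic 3 ℚ := by
  rw [Polynomial.cyclotomic_prime ℚ 3]
  rw [Finset.sum_range_succ, Finset.sum_range_succ, Finset.sum_range_one]
  rw [cp]
  ring

instance cp_irred : Fact (Irreducible cp) :=
  ⟨cp_eq_cyclotomic ▸ Polynomial.cyclotomic.irreducible_rat (by norm_num)⟩

lemma cp_natDegree : cp.natDegree = 2 := by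
  have h : cp = Polynomial.C 1 * Polynomial.X ^ 2 + Polynomial.C 1 * Polynomial.X
      + Polynomial.C 1 := by simp [cp]
  rw [h, Polynomial.natDegree_quadratic one_ne_zero]

abbrev F : Type := AdjoinRoot cp

instance : CharZero F := charZero_of_injective_algebraMap (algebraMap ℚ F).injective

def om : F := AdjoinRoot.root cp

lemma om_rel : om ^ 2 + om + 1 = 0 := by
  have h : Polynomial.eval₂ (AdjoinRoot.of cp) om (Polynomial.X ^ 2 + Polynomial.X + 1) = 0 :=
    AdjoinRoot.eval₂_root cp
  have e : Polynomial.eval₂ (AdjoinRoot.of cp) om (Polynomial.X ^ 2 + Polynomial.X + 1)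
      = om ^ 2 + om + 1 := by simp
  rw [e] at h
  exact h

lemma om_cube : om ^ 3 = 1 := by linear_combination (om - 1) * om_rel

lemma om_ne_zero : om ≠ 0 := by
  intro h
  have h3 := om_cube
  rw [h] at h3
  simpa using h3

lemma om_ne_one : om ≠ 1 := by
  intro h
  have h3 := om_rel
  rw [h] at h3
  norm_num at h3

lemma om_pow_mod (n : ℕ) : om ^ n = om ^ (n % 3) := by
  conv_lhs => rw [← Nat.div_add_mod n 3]
  rw [pow_add, pow_mul, om_cube, one_pow, one_mul]

def pbF : PowerBasis ℚ F := AdjoinRoot.powerBasis (cp_irred.out.ne_zero)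

lemma pbF_dim : pbF.dim = 2 := by
  unfold pbF
  rw [AdjoinRoot.powerBasis_dim, cp_natDegree]

lemma finrank_F : Module.finrank ℚ F = 2 := by
  rw [pbF.finrank, pbF_dim]

instance : FiniteDimensional ℚ F := pbF.finite

def bF : Module.Basis (Fin 2) ℚ F := pbF.basis.reindex (finCongr pbF_dim)

lemma bF_apply (i : Fin 2) : bF i = om ^ (i : ℕ) := by
  rw [bF, Module.Basis.reindex_apply, PowerBasis.coe_basis]
  unfold pbF
  rw [AdjoinRoot.powerBasis_gen]
  rfl

/-- `1, ω` are linearly independent over `ℚ`. -/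
lemma om_indep {a b : ℚ} (h : algebraMap ℚ F a + algebraMap ℚ F b * om = 0) :
    a = 0 ∧ b = 0 := by
  have hli := Fintype.linearIndependent_iff.mp bF.linearIndependent ![a, b] ?_
  · exact ⟨hli 0, hli 1⟩
  · rw [Fin.sum_univ_two]
    simp only [Matrix.cons_val_zero, Matrix.cons_val_one, Matrix.head_cons, bF_apply]
    simp only [Fin.isValue, Fin.val_zero, Fin.val_one, pow_zero, pow_one,
      Algebra.smul_def, mul_one]
    exact h

lemma one_sub_om_ne_zero : (1 : F) - om ≠ 0 := by
  intro h
  exact om_ne_one (by linear_combination -h)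

lemma aeval_om_sq : Polynomial.aeval (om ^ 2) cp = 0 := by
  simp only [cp, map_add, map_pow, Polynomial.aeval_X, map_one]
  linear_combination om_rel + om * om_cube

/-- The nontrivial automorphism of `F`, sending `ω ↦ ω²`. -/
def sg : F →ₐ[ℚ] F := AdjoinRoot.liftAlgHom cp (Algebra.ofId ℚ F) (om ^ 2) aeval_om_sq

lemma sg_om : sg om = om ^ 2 := AdjoinRoot.liftAlgHom_root _ _ _ aeval_om_sq

lemma sg_sg (v : F) : sg (sg v) = v := by
  have h : (sg.comp sg) = AlgHom.id ℚ F := by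
    apply AdjoinRoot.algHom_ext
    show sg (sg om) = om
    rw [sg_om, map_pow, sg_om, ← pow_mul]
    rw [show (2 * 2 : ℕ) = 3 + 1 by norm_num, pow_add, om_cube, one_mul, pow_one]
  exact DFunLike.congr_fun h v

/-! ### Polynomial gadgets -/

open MvPolynomial

def e2 : R2 := X 0 ^ 2 + X 0 * X 1 + X 1 ^ 2

def dl : R2 := (X 0 * X 1 * (X 0 + X 1)) ^ 2

def g1 : R2 := X 0 - X 1

def g3 : R2 := X 0 * X 1 * (X 0 - X 1)

/-- Evaluation at `(1, ω)`. -/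
def evF : R2 →ₐ[ℚ] F := aeval ![1, om]

lemma evF_X0 : evF (X 0) = 1 := by simp [evF]
lemma evF_X1 : evF (X 1) = om := by simp [evF]

lemma evF_e2 : evF e2 = 0 := by
  rw [e2]
  simp only [map_add, map_mul, map_pow, evF_X0, evF_X1]
  linear_combination om_rel

lemma evF_dl : evF dl = 1 := by
  rw [dl]
  simp only [map_add, map_mul, map_pow, evF_X0, evF_X1]
  linear_combination (om ^ 2 + om - 1) * om_rel

lemma evF_g1 : evF g1 = 1 - om := by
  rw [g1, map_sub, evF_X0, evF_X1]

lemma evF_g3 : evF g3 = om * (1 - om) := by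
  rw [g3]
  simp only [map_sub, map_mul, evF_X0, evF_X1]
  ring

/-! ### Basic nonvanishing facts in `R2` -/

lemma e2_ne_zero : e2 ≠ 0 := by
  intro h
  have h2 := congrArg (aeval ![(1 : ℚ), 0]) h
  simp [e2] at h2

lemma X0_add_X1_ne_zero : (X 0 + X 1 : R2) ≠ 0 := by
  intro h
  have h2 := congrArg (aeval ![(1 : ℚ), 0]) h
  simp at h2

lemma g1_ne_zero : g1 ≠ 0 := by
  intro h
  have h2 := congrArg (aeval ![(1 : ℚ), 0]) h
  simp [g1] at h2

/-! ### Substitution computations -/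

lemma fayA_X0 : fayA (X 0) = X 0 + X 1 := by simp [fayA]
lemma fayA_X1 : fayA (X 1) = -X 1 := by simp [fayA]
lemma rotA_X0 : rotA (X 0) = -X 0 - X 1 := by simp [rotA]
lemma rotA_X1 : rotA (X 1) = X 0 := by simp [rotA]
lemma swapA_X0 : swapA (X 0) = X 1 := by simp [swapA]
lemma swapA_X1 : swapA (X 1) = X 0 := by simp [swapA]

lemma fayA_e2 : fayA e2 = e2 := by
  rw [e2]; simp only [map_add, map_mul, map_pow, fayA_X0, fayA_X1]; ring

lemma rotA_e2 : rotA e2 = e2 := by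
  rw [e2]; simp only [map_add, map_mul, map_pow, rotA_X0, rotA_X1]; ring

lemma swapA_e2 : swapA e2 = e2 := by
  rw [e2]; simp only [map_add, map_mul, map_pow, swapA_X0, swapA_X1]; ring

lemma fayA_dl : fayA dl = dl := by
  rw [dl]; simp only [map_add, map_mul, map_pow, fayA_X0, fayA_X1]; ring

lemma rotA_dl : rotA dl = dl := by
  rw [dl]; simp only [map_add, map_mul, map_pow, rotA_X0, rotA_X1]; ring

lemma swapA_dl : swapA dl = dl := by
  rw [dl]; simp only [map_add, map_mul, map_pow, swapA_X0, swapA_X1]; ring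

/-- The substitution `(X,Y) ↦ (-X,-Y)`. -/
def negA : R2 →ₐ[ℚ] R2 := aeval ![-X 0, -X 1]

lemma swapA_comp_fayA : swapA.comp fayA = negA.comp rotA := by
  apply MvPolynomial.algHom_ext
  intro i
  fin_cases i <;> simp [fayA, rotA, swapA, negA] <;> ring

lemma swapA_comp_rotA : swapA.comp rotA = negA.comp fayA := by
  apply MvPolynomial.algHom_ext
  intro i
  fin_cases i <;> simp [fayA, rotA, swapA, negA] <;> ring

/-! ### Homogeneous scaling -/

lemma deg2 (d : Fin 2 →₀ ℕ) : d.degree = d 0 + d 1 := by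
  rw [Finsupp.degree_apply, Finset.sum_subset (Finset.subset_univ _), Fin.sum_univ_two]
  intro i _ hi
  simpa using Finsupp.notMem_support_iff.mp hi

lemma isHomog_deg {Q : R2} {N : ℕ} (h : Q.IsHomogeneous N) {d : Fin 2 →₀ ℕ}
    (hd : coeff d Q ≠ 0) : d 0 + d 1 = N := by
  have hw := h hd
  rw [← deg2 d, Finsupp.degree_eq_weight_one]
  exact hw

/-- Scaling lemma: evaluating a homogeneous polynomial at `t • x`. -/
lemma aeval_scale {A : Type} [CommRing A] [Algebra ℚ A] {Q : R2} {N : ℕ}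
    (h : Q.IsHomogeneous N) (t : A) (x : Fin 2 → A) :
    aeval (fun i => t * x i) Q = t ^ N * aeval x Q := by
  conv_lhs => rw [Q.as_sum]
  conv_rhs => rw [Q.as_sum]
  rw [map_sum, map_sum, Finset.mul_sum]
  apply Finset.sum_congr rfl
  intro d hd
  have hdeg : d 0 + d 1 = N := isHomog_deg h (mem_support_iff.mp hd)
  rw [aeval_monomial, aeval_monomial, Finsupp.prod_pow, Finsupp.prod_pow,
    Fin.prod_univ_two, Fin.prod_univ_two, mul_pow, mul_pow, ← hdeg, pow_add]
  ring

/-! ### The polynomial model `UU N` -/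

def fayOp : R2 →ₗ[ℚ] R2 :=
  LinearMap.mulLeft ℚ (X 0 + X 1 : R2)
    - (LinearMap.mulLeft ℚ (X 0 : R2)).comp fayA.toLinearMap
    - (LinearMap.mulLeft ℚ (X 1 : R2)).comp rotA.toLinearMap

def UU (N : ℕ) : Submodule ℚ R2 :=
  homogeneousSubmodule (Fin 2) ℚ N
    ⊓ LinearMap.ker (swapA.toLinearMap + LinearMap.id)
    ⊓ LinearMap.ker fayOp

lemma mem_UU {N : ℕ} {Q : R2} :
    Q ∈ UU N ↔ Q.IsHomogeneous N ∧ swapA Q = -Q ∧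
      (X 0 + X 1) * Q = X 0 * fayA Q + X 1 * rotA Q := by
  simp only [UU, Submodule.mem_inf, LinearMap.mem_ker, LinearMap.add_apply,
    LinearMap.sub_apply, LinearMap.comp_apply, LinearMap.mulLeft_apply,
    AlgHom.toLinearMap_apply, LinearMap.id_apply, mem_homogeneousSubmodule, fayOp]
  constructor
  · rintro ⟨⟨h1, h2⟩, h3⟩
    exact ⟨h1, by linear_combination h2, by linear_combination h3⟩
  · rintro ⟨h1, h2, h3⟩
    exact ⟨⟨h1, by linear_combination h2⟩, by linear_combination h3⟩

lemma subst_homog {N : ℕ} {Q : R2} (h : Q.IsHomogeneous N) (φ : R2 →ₐ[ℚ] R2)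
    (hφ : ∀ i, (φ (X i)).IsHomogeneous 1) : (φ Q).IsHomogeneous N := by
  have hu : φ Q = aeval (⇑φ ∘ X) Q := by
    conv_lhs => rw [MvPolynomial.aeval_unique φ]
  rw [hu]
  have h2 := h.aeval (⇑φ ∘ X) (fun i => hφ i)
  rwa [one_mul] at h2

lemma fayA_homog {N : ℕ} {Q : R2} (h : Q.IsHomogeneous N) : (fayA Q).IsHomogeneous N := by
  apply subst_homog h
  intro i
  fin_cases i
  · rw [show X (⟨0, by omega⟩ : Fin 2) = (X 0 : R2) from rfl, fayA_X0]
    exact (isHomogeneous_X _ _).add (isHomogeneous_X _ _)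
  · rw [show X (⟨1, by omega⟩ : Fin 2) = (X 1 : R2) from rfl, fayA_X1]
    exact (isHomogeneous_X _ _).neg

lemma rotA_homog {N : ℕ} {Q : R2} (h : Q.IsHomogeneous N) : (rotA Q).IsHomogeneous N := by
  apply subst_homog h
  intro i
  fin_cases i
  · rw [show X (⟨0, by omega⟩ : Fin 2) = (X 0 : R2) from rfl, rotA_X0]
    exact ((isHomogeneous_X _ _).neg).sub (isHomogeneous_X _ _)
  · rw [show X (⟨1, by omega⟩ : Fin 2) = (X 1 : R2) from rfl, rotA_X1]
    exact isHomogeneous_X _ _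

lemma negA_homog_eq {N : ℕ} {Q : R2} (h : Q.IsHomogeneous N) :
    negA Q = (-1 : R2) ^ N * Q := by
  have hsc := aeval_scale (A := R2) h (-1) X
  have hx : (fun i => (-1 : R2) * X i) = ![-X 0, -X 1] := by
    funext i
    fin_cases i <;> simp
  rw [hx] at hsc
  have hid : aeval X Q = Q := by
    have h1 : (AlgHom.id ℚ R2) Q = aeval ((AlgHom.id ℚ R2) ∘ X) Q := by
      conv_lhs => rw [MvPolynomial.aeval_unique (AlgHom.id ℚ R2)]
    simpa using h1.symm
  rw [hid] at hsc
  show aeval ![-X 0, -X 1] Q = _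
  rw [hsc]

lemma UU_even {N : ℕ} (hN : Even N) : UU N = ⊥ := by
  rw [eq_bot_iff]
  intro Q hQ
  obtain ⟨h1, h2, h3⟩ := mem_UU.mp hQ
  have hfQ : (fayA Q).IsHomogeneous N := fayA_homog h1
  have hrQ : (rotA Q).IsHomogeneous N := rotA_homog h1
  have key := congrArg swapA h3
  simp only [map_mul, map_add, swapA_X0, swapA_X1, h2] at key
  have hsf : swapA (fayA Q) = negA (rotA Q) := by
    have h := DFunLike.congr_fun swapA_comp_fayA Q
    simpa only [AlgHom.comp_apply] using h
  have hsr : swapA (rotA Q) = negA (fayA Q) := by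
    have h := DFunLike.congr_fun swapA_comp_rotA Q
    simpa only [AlgHom.comp_apply] using h
  rw [hsf, hsr, negA_homog_eq hrQ, negA_homog_eq hfQ, hN.neg_one_pow, one_mul, one_mul]
    at key
  -- key : (X1 + X0) * (-Q) = X1 * rotA Q + X0 * fayA Q
  have h4 : (X 0 + X 1) * Q + (X 0 + X 1) * Q = 0 := by linear_combination h3 - key
  have h5 : (X 0 + X 1) * Q = 0 := by
    have h2ne : (2 : R2) ≠ 0 := by
      intro hcon
      have hc := congrArg (aeval ![(1 : ℚ), 0]) hcon
      simp at hc
    have h6 : (2 : R2) * ((X 0 + X 1) * Q) = 0 := by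
      rw [two_mul]
      exact h4
    rcases mul_eq_zero.mp h6 with h | h
    · exact absurd h h2ne
    · exact h

  rcases mul_eq_zero.mp h5 with h | h
  · exact absurd h X0_add_X1_ne_zero
  · simpa using h

/-! ### Basis of the homogeneous component -/

abbrev HS (N : ℕ) : Submodule ℚ R2 := homogeneousSubmodule (Fin 2) ℚ N

def mdeg (N : ℕ) (k : Fin (N + 1)) : Fin 2 →₀ ℕ :=
  Finsupp.single 0 (k : ℕ) + Finsupp.single 1 (N - (k : ℕ))

lemma mdeg_0 {N : ℕ} (k : Fin (N + 1)) : (mdeg N k) 0 = (k : ℕ) := by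
  simp [mdeg, Finsupp.single_apply]

lemma mdeg_1 {N : ℕ} (k : Fin (N + 1)) : (mdeg N k) 1 = N - (k : ℕ) := by
  simp [mdeg, Finsupp.single_apply]

lemma mdeg_degree {N : ℕ} (k : Fin (N + 1)) : (mdeg N k).degree = N := by
  rw [deg2, mdeg_0, mdeg_1]
  have := k.is_lt
  omega

lemma mdeg_inj {N : ℕ} : Function.Injective (mdeg N) := by
  intro a b h
  have h0 := congrArg (fun d : Fin 2 →₀ ℕ => d 0) h
  simp only [mdeg_0] at h0
  exact Fin.ext h0

def hbF (N : ℕ) : (Fin (N + 1) → ℚ) →ₗ[ℚ] R2 :=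
  ∑ k : Fin (N + 1), (monomial (mdeg N k)).comp (LinearMap.proj k)

lemma hbF_apply (N : ℕ) (c : Fin (N + 1) → ℚ) :
    hbF N c = ∑ k, monomial (mdeg N k) (c k) := by
  simp [hbF, LinearMap.sum_apply]

lemma coeff_hbF (N : ℕ) (c : Fin (N + 1) → ℚ) (j : Fin (N + 1)) :
    coeff (mdeg N j) (hbF N c) = c j := by
  rw [hbF_apply, MvPolynomial.coeff_sum, Finset.sum_eq_single j]
  · rw [coeff_monomial, if_pos rfl]
  · intro k _ hk
    rw [coeff_monomial, if_neg (fun h => hk (mdeg_inj h))]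
  · intro h
    exact absurd (Finset.mem_univ j) h

lemma coeff_hbF_ne (N : ℕ) (c : Fin (N + 1) → ℚ) {d : Fin 2 →₀ ℕ}
    (hd : d.degree ≠ N) : coeff d (hbF N c) = 0 := by
  rw [hbF_apply, MvPolynomial.coeff_sum]
  apply Finset.sum_eq_zero
  intro k _
  rw [coeff_monomial, if_neg]
  intro h
  exact hd (h ▸ mdeg_degree k)

lemma hbF_mem (N : ℕ) (c : Fin (N + 1) → ℚ) : hbF N c ∈ HS N := by
  rw [hbF_apply]
  apply Submodule.sum_mem
  intro k _
  exact isHomogeneous_monomial _ (mdeg_degree k)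

lemma hbF_surj {N : ℕ} {Q : R2} (h : Q.IsHomogeneous N) :
    hbF N (fun k => coeff (mdeg N k) Q) = Q := by
  apply MvPolynomial.ext
  intro d
  by_cases hdn : d.degree = N
  · have hsum : d 0 + d 1 = N := by rw [← deg2 d]; exact hdn
    have hd0 : d 0 < N + 1 := by omega
    have hdm : d = mdeg N ⟨d 0, hd0⟩ := by
      apply DFunLike.ext
      intro i
      fin_cases i
      · show d 0 = mdeg N ⟨d 0, hd0⟩ 0
        rw [mdeg_0]
      · show d 1 = mdeg N ⟨d 0, hd0⟩ 1
        rw [mdeg_1]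
        have hval : ((⟨d 0, hd0⟩ : Fin (N + 1)) : ℕ) = d 0 := rfl
        rw [hval]
        omega
    rw [hdm, coeff_hbF]
  · rw [coeff_hbF_ne _ _ hdn, h.coeff_eq_zero hdn]

def hEquiv (N : ℕ) : (Fin (N + 1) → ℚ) ≃ₗ[ℚ] HS N :=
  LinearEquiv.ofBijective ((hbF N).codRestrict (HS N) (hbF_mem N)) (by
    constructor
    · intro c c' h
      funext j
      have h2 := congrArg (fun q : HS N => coeff (mdeg N j) (q : R2)) h
      simpa only [LinearMap.codRestrict_apply, coeff_hbF] using h2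
    · rintro ⟨Q, hQ⟩
      exact ⟨fun k => coeff (mdeg N k) Q,
        Subtype.ext (hbF_surj (mem_homogeneousSubmodule _ _ |>.mp hQ))⟩)

instance HS_fd (N : ℕ) : FiniteDimensional ℚ (HS N) := Module.Finite.equiv (hEquiv N)

lemma finrank_HS (N : ℕ) : Module.finrank ℚ (HS N) = N + 1 := by
  rw [← (hEquiv N).finrank_eq, Module.finrank_pi, Fintype.card_fin]

/-! ### Division by `e2` -/

lemma e2_homog : e2.IsHomogeneous 2 := by
  rw [e2]
  exact ((isHomogeneous_X_pow _ _).add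
    ((isHomogeneous_X _ _).mul (isHomogeneous_X _ _))).add (isHomogeneous_X_pow _ _)

lemma dl_homog : dl.IsHomogeneous 6 := by
  rw [dl]
  have h3 : (X 0 * X 1 * (X 0 + X 1) : R2).IsHomogeneous 3 :=
    ((isHomogeneous_X _ _).mul (isHomogeneous_X _ _)).mul
      ((isHomogeneous_X _ _).add (isHomogeneous_X _ _))
  exact h3.pow 2

def evHS (N : ℕ) : HS N →ₗ[ℚ] F := evF.toLinearMap.comp (HS N).subtype

lemma evHS_apply (N : ℕ) (q : HS N) : evHS N q = evF (q : R2) := rfl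

lemma evHS_surj (N : ℕ) : LinearMap.range (evHS (N + 1)) = ⊤ := by
  have hm2 : om ^ (N + 1) ∈ LinearMap.range (evHS (N + 1)) := by
    refine ⟨⟨X 1 ^ (N + 1), isHomogeneous_X_pow _ _⟩, ?_⟩
    rw [evHS_apply]
    show evF (X 1 ^ (N + 1)) = _
    rw [map_pow, evF_X1]
  have hm1 : om ^ N ∈ LinearMap.range (evHS (N + 1)) := by
    refine ⟨⟨X 0 * X 1 ^ N, ?_⟩, ?_⟩
    · have h := (isHomogeneous_X ℚ (0 : Fin 2)).mul
        (isHomogeneous_X_pow (R := ℚ) (1 : Fin 2) N)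
      rwa [show 1 + N = N + 1 by omega] at h
    · rw [evHS_apply]
      show evF (X 0 * X 1 ^ N) = _
      rw [map_mul, map_pow, evF_X0, evF_X1, one_mul]
  set p := LinearMap.range (evHS (N + 1))
  have homsq : om ^ 2 = -1 - om := by linear_combination om_rel
  have hones : (1 : F) ∈ p ∧ om ∈ p := by
    have hmod : N % 3 = 0 ∨ N % 3 = 1 ∨ N % 3 = 2 := by omega
    rw [om_pow_mod N] at hm1
    rw [om_pow_mod (N + 1)] at hm2
    rcases hmod with h | h | h
    · rw [h, pow_zero] at hm1
      rw [show (N + 1) % 3 = 1 by omega, pow_one] at hm2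
      exact ⟨hm1, hm2⟩
    · rw [h, pow_one] at hm1
      rw [show (N + 1) % 3 = 2 by omega, homsq] at hm2
      refine ⟨?_, hm1⟩
      have h1 : (-1 : F) = (-1 - om) + om := by ring
      have := p.add_mem hm2 hm1
      rw [← h1] at this
      simpa using p.neg_mem this
    · rw [h, homsq] at hm1
      rw [show (N + 1) % 3 = 0 by omega, pow_zero] at hm2
      refine ⟨hm2, ?_⟩
      have : om = -(( -1 - om : F)) - 1 := by ring
      rw [this]
      exact p.sub_mem (p.neg_mem hm1) hm2
  rw [eq_top_iff]
  have hspan : Submodule.span ℚ {(1 : F), om} = ⊤ := by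
    rw [← bF.span_eq]
    congr 1
    ext x
    constructor
    · rintro (rfl | rfl)
      · exact ⟨0, by rw [bF_apply]; rfl⟩
      · exact ⟨1, by rw [bF_apply]; exact pow_one om⟩
    · rintro ⟨i, rfl⟩
      fin_cases i
      · left; rw [bF_apply]; rfl
      · right; rw [bF_apply]; exact pow_one om
  rw [← hspan]
  apply Submodule.span_le.mpr
  rintro x (rfl | rfl)
  · exact hones.1
  · exact hones.2

lemma exists_e2_div {N : ℕ} {Q : R2} (hQ : Q.IsHomogeneous (N + 2)) (hv : evF Q = 0) :
    ∃ q : R2, q.IsHomogeneous N ∧ Q = e2 * q := by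
  have he2N : ∀ q : R2, q.IsHomogeneous N → e2 * q ∈ HS (N + 2) := by
    intro q hq
    have h := e2_homog.mul hq
    rwa [show 2 + N = N + 2 by omega, ← mem_homogeneousSubmodule] at h
  set mulE2 : HS N →ₗ[ℚ] HS (N + 2) :=
    LinearMap.codRestrict (HS (N + 2)) ((LinearMap.mulLeft ℚ e2).comp (HS N).subtype)
      (fun q => he2N q.1 q.2) with hmulE2
  have hinj : Function.Injective mulE2 := by
    intro a b h
    have h2 : e2 * (a : R2) = e2 * (b : R2) := congrArg Subtype.val h
    exact Subtype.ext (mul_left_cancel₀ e2_ne_zero h2)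
  have hle : LinearMap.range mulE2 ≤ LinearMap.ker (evHS (N + 2)) := by
    rintro x ⟨q, rfl⟩
    rw [LinearMap.mem_ker, evHS_apply]
    show evF (e2 * (q : R2)) = 0
    rw [map_mul, evF_e2, zero_mul]
  have h1 : Module.finrank ℚ (LinearMap.range mulE2) = N + 1 := by
    rw [LinearMap.finrank_range_of_inj hinj, finrank_HS]
  have h2 : Module.finrank ℚ (LinearMap.ker (evHS (N + 2))) = N + 1 := by
    have hr := LinearMap.finrank_range_add_finrank_ker (evHS (N + 2))
    rw [finrank_HS, evHS_surj (N + 1), finrank_top, finrank_F] at hr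
    omega
  have heq : LinearMap.range mulE2 = LinearMap.ker (evHS (N + 2)) :=
    Submodule.eq_of_le_of_finrank_le hle (by omega)
  have hmem : (⟨Q, hQ⟩ : HS (N + 2)) ∈ LinearMap.ker (evHS (N + 2)) := by
    rw [LinearMap.mem_ker, evHS_apply]
    exact hv
  rw [← heq] at hmem
  obtain ⟨q, hq⟩ := hmem
  refine ⟨(q : R2), q.2, ?_⟩
  have := congrArg Subtype.val hq
  exact this.symm

/-! ### The evaluation constraint on `UU N` -/

lemma evF_fayA {N : ℕ} {Q : R2} (h : Q.IsHomogeneous N) :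
    evF (fayA Q) = (-(om ^ 2)) ^ N * sg (evF Q) := by
  have hstep : evF (fayA Q) = aeval ![1 + om, -om] Q := by
    show evF (aeval ![X 0 + X 1, -X 1] Q) = _
    rw [comp_aeval_apply (f := ![X 0 + X 1, -X 1]) evF Q]
    have he : (fun i => evF (![X 0 + X 1, -X 1] i)) = ![1 + om, -om] := by
      funext i
      fin_cases i <;> simp [evF]
    rw [he]
  have hsg : sg (evF Q) = aeval ![1, om ^ 2] Q := by
    show sg (aeval ![1, om] Q) = _
    rw [comp_aeval_apply (f := ![1, om]) sg Q]
    have he : (fun i => sg (![1, om] i)) = ![1, om ^ 2] := by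
      funext i
      fin_cases i <;> simp [sg_om]
    rw [he]
  have hsc : ![1 + om, -om] = (fun i => (-(om ^ 2)) * (![1, om ^ 2] i)) := by
    funext i
    fin_cases i
    · show (1 + om : F) = -(om ^ 2) * 1
      linear_combination om_rel
    · show (-om : F) = -(om ^ 2) * om ^ 2
      linear_combination om * om_cube
  rw [hstep, hsc, aeval_scale h, hsg]

lemma evF_rotA {N : ℕ} {Q : R2} (h : Q.IsHomogeneous N) :
    evF (rotA Q) = (om ^ 2) ^ N * evF Q := by
  have hstep : evF (rotA Q) = aeval ![-1 - om, 1] Q := by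
    show evF (aeval ![-X 0 - X 1, X 0] Q) = _
    rw [comp_aeval_apply (f := ![-X 0 - X 1, X 0]) evF Q]
    have he : (fun i => evF (![-X 0 - X 1, X 0] i)) = ![-1 - om, 1] := by
      funext i
      fin_cases i <;> simp [evF]
    rw [he]
  have hsc : ![-1 - om, 1] = (fun i => (om ^ 2) * (![1, om] i)) := by
    funext i
    fin_cases i
    · show (-1 - om : F) = om ^ 2 * 1
      linear_combination -om_rel
    · show (1 : F) = om ^ 2 * om
      linear_combination -om_cube
  rw [hstep, hsc, aeval_scale h]
  rfl

lemma UU_constraint {N : ℕ} (hodd : Odd N) {Q : R2} (hQ : Q ∈ UU N) :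
    sg (evF Q) = (om + om ^ (N + 2)) * evF Q := by
  obtain ⟨h1, h2, h3⟩ := mem_UU.mp hQ
  have key := congrArg evF h3
  simp only [map_add, map_mul, evF_X0, evF_X1] at key
  rw [evF_fayA h1, evF_rotA h1, Odd.neg_pow hodd] at key
  rw [← pow_mul] at key
  have hw2 : om ^ (2 * N) = (om ^ N) ^ 2 := by rw [← pow_mul, mul_comm]
  rw [hw2] at key
  set v := evF Q
  set w := om ^ N with hw
  have hw3 : w ^ 3 = 1 := by
    rw [hw, ← pow_mul, mul_comm, pow_mul, om_cube, one_pow]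
  have hNpow : om ^ (N + 2) = w * om ^ 2 := by rw [hw, ← pow_add]
  rw [hNpow]
  linear_combination w * key - (sg v - om * v) * hw3 - w * v * om_rel

lemma UU_ev_case2 {N : ℕ} (hodd : Odd N) (hmod : N % 3 = 2) {Q : R2}
    (hQ : Q ∈ UU N) : evF Q = 0 := by
  have hc := UU_constraint hodd hQ
  rw [om_pow_mod (N + 2), show (N + 2) % 3 = 1 by omega, pow_one] at hc
  set v := evF Q
  have h2 := congrArg sg hc
  rw [sg_sg, map_mul, map_add, sg_om] at h2
  rw [hc] at h2
  -- h2 : v = (om^2 + om^2) * ((om + om) * v)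
  have h3 : (3 : F) * v = 0 := by
    linear_combination -h2 - 4 * v * om_cube
  rcases mul_eq_zero.mp h3 with h | h
  · norm_num at h
  · exact h

/-! ### The kernel bound -/

def LL (c : F) : F →ₗ[ℚ] F := sg.toLinearMap - LinearMap.mulLeft ℚ c

lemma ker_LL_le {c : F} (hc : c ≠ 1) :
    Module.finrank ℚ (LinearMap.ker (LL c)) ≤ 1 := by
  have hr := LinearMap.finrank_range_add_finrank_ker (LL c)
  rw [finrank_F] at hr
  have hne : Module.finrank ℚ (LinearMap.range (LL c)) ≠ 0 := by
    intro h0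
    have hb : LinearMap.range (LL c) = ⊥ := Submodule.finrank_eq_zero.mp h0
    have h1 : LL c 1 = 0 := by
      have := LinearMap.range_eq_bot.mp hb
      rw [this]
      rfl
    have h2 : (1 : F) - c = 0 := by
      have : LL c 1 = sg 1 - c * 1 := rfl
      rw [this, map_one, mul_one] at h1
      exact h1
    exact hc (by linear_combination -h2)
  omega

lemma c_ne_one {N : ℕ} (hmod : N % 3 ≠ 2) : (om + om ^ (N + 2)) ≠ 1 := by
  have hm : N % 3 = 0 ∨ N % 3 = 1 := by omega
  rcases hm with h | h
  · rw [om_pow_mod (N + 2), show (N + 2) % 3 = 2 by omega]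
    intro hcon
    -- om + om^2 = 1, but om + om^2 = -1
    have : (2 : F) = 0 := by linear_combination om_rel - hcon
    norm_num at this
  · rw [om_pow_mod (N + 2), show (N + 2) % 3 = 0 by omega, pow_zero]
    intro hcon
    exact om_ne_zero (by linear_combination hcon)

/-! ### Membership of witnesses -/

lemma e2_mul_mem {N : ℕ} {q : R2} (hq : q ∈ UU N) : e2 * q ∈ UU (N + 2) := by
  obtain ⟨h1, h2, h3⟩ := mem_UU.mp hq
  refine mem_UU.mpr ⟨?_, ?_, ?_⟩
  · have h := e2_homog.mul h1
    rwa [show 2 + N = N + 2 by omega] at h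
  · rw [map_mul, swapA_e2, h2]
    ring
  · rw [map_mul, map_mul, fayA_e2, rotA_e2]
    linear_combination e2 * h3

lemma dl_mul_mem {N : ℕ} {q : R2} (hq : q ∈ UU N) : dl * q ∈ UU (N + 6) := by
  obtain ⟨h1, h2, h3⟩ := mem_UU.mp hq
  refine mem_UU.mpr ⟨?_, ?_, ?_⟩
  · have h := dl_homog.mul h1
    rwa [show 6 + N = N + 6 by omega] at h
  · rw [map_mul, swapA_dl, h2]
    ring
  · rw [map_mul, map_mul, fayA_dl, rotA_dl]
    linear_combination dl * h3

lemma dl_pow_mem {n : ℕ} {g : R2} (hg : g ∈ UU n) (b : ℕ) :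
    dl ^ b * g ∈ UU (6 * b + n) := by
  induction b with
  | zero => simpa using hg
  | succ b ih =>
      have h := dl_mul_mem ih
      rw [show 6 * (b + 1) + n = 6 * b + n + 6 by omega,
        show dl ^ (b + 1) * g = dl * (dl ^ b * g) by ring]
      exact h

lemma g1_mem : g1 ∈ UU 1 := by
  refine mem_UU.mpr ⟨(isHomogeneous_X ℚ 0).sub (isHomogeneous_X ℚ 1), ?_, ?_⟩
  · rw [g1, map_sub, swapA_X0, swapA_X1]
    ring
  · rw [g1, map_sub, map_sub, fayA_X0, fayA_X1, rotA_X0, rotA_X1]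
    ring

lemma g3_mem : g3 ∈ UU 3 := by
  refine mem_UU.mpr ⟨?_, ?_, ?_⟩
  · exact ((isHomogeneous_X ℚ 0).mul (isHomogeneous_X ℚ 1)).mul
      ((isHomogeneous_X ℚ 0).sub (isHomogeneous_X ℚ 1))
  · rw [g3]
    simp only [map_mul, map_sub, swapA_X0, swapA_X1]
    ring
  · rw [g3]
    simp only [map_mul, map_sub, fayA_X0, fayA_X1, rotA_X0, rotA_X1]
    ring

/-! ### The recursion -/

lemma UU_le_HS (N : ℕ) : UU N ≤ HS N := fun _ hQ => (mem_UU.mp hQ).1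

instance UU_fd (N : ℕ) : FiniteDimensional ℚ (UU N) :=
  Submodule.finiteDimensional_of_le (UU_le_HS N)

def VU (N : ℕ) : UU N →ₗ[ℚ] F := evF.toLinearMap.comp (UU N).subtype

lemma VU_apply (N : ℕ) (q : UU N) : VU N q = evF (q : R2) := rfl

lemma finrank_ker_VU {N : ℕ} (h2 : 2 ≤ N) :
    Module.finrank ℚ (LinearMap.ker (VU N)) = Module.finrank ℚ (UU (N - 2)) := by
  have hmm : ∀ q : UU (N - 2), e2 * (q : R2) ∈ UU N := by
    intro q
    have h := e2_mul_mem q.2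
    rwa [show N - 2 + 2 = N by omega] at h
  set f0 : UU (N - 2) →ₗ[ℚ] UU N :=
    LinearMap.codRestrict (UU N) ((LinearMap.mulLeft ℚ e2).comp (UU (N - 2)).subtype)
      hmm with hf0
  have hinj : Function.Injective f0 := by
    intro a b hab
    have h1 : e2 * (a : R2) = e2 * (b : R2) := congrArg Subtype.val hab
    exact Subtype.ext (mul_left_cancel₀ e2_ne_zero h1)
  have hrange : LinearMap.range f0 = LinearMap.ker (VU N) := by
    apply le_antisymm
    · rintro x ⟨q, rfl⟩
      rw [LinearMap.mem_ker, VU_apply]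
      show evF (e2 * (q : R2)) = 0
      rw [map_mul, evF_e2, zero_mul]
    · rintro ⟨Q, hQU⟩ hk
      have hQhom : Q.IsHomogeneous (N - 2 + 2) := by
        have h := (mem_UU.mp hQU).1
        rwa [show N - 2 + 2 = N by omega]
      have hQv : evF Q = 0 := by
        rw [LinearMap.mem_ker, VU_apply] at hk
        exact hk
      obtain ⟨q, hqhom, hqe⟩ := exists_e2_div hQhom hQv
      obtain ⟨h1, h2, h3⟩ := mem_UU.mp hQU
      have hq2 : swapA q = -q := by
        apply mul_left_cancel₀ e2_ne_zero
        have hsw : swapA Q = e2 * swapA q := by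
          rw [hqe, map_mul, swapA_e2]
        rw [← hsw, h2, hqe]
        ring
      have hq3 : (X 0 + X 1) * q = X 0 * fayA q + X 1 * rotA q := by
        apply mul_left_cancel₀ e2_ne_zero
        have hfq : fayA Q = e2 * fayA q := by rw [hqe, map_mul, fayA_e2]
        have hrq : rotA Q = e2 * rotA q := by rw [hqe, map_mul, rotA_e2]
        have h3' := h3
        rw [hfq, hrq, hqe] at h3'
        linear_combination h3'
      refine ⟨⟨q, mem_UU.mpr ⟨hqhom, hq2, hq3⟩⟩, ?_⟩
      apply Subtype.ext
      show e2 * q = Q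
      exact hqe.symm
  rw [← hrange, LinearMap.finrank_range_of_inj hinj]

lemma finrank_range_VU_le {N : ℕ} (hodd : Odd N) (hmod : N % 3 ≠ 2) :
    Module.finrank ℚ (LinearMap.range (VU N)) ≤ 1 := by
  have hle : LinearMap.range (VU N) ≤ LinearMap.ker (LL (om + om ^ (N + 2))) := by
    rintro x ⟨q, rfl⟩
    rw [LinearMap.mem_ker, VU_apply]
    show sg (evF (q : R2)) - (om + om ^ (N + 2)) * evF (q : R2) = 0
    rw [UU_constraint hodd q.2]
    ring
  exact le_trans (Submodule.finrank_mono hle) (ker_LL_le (c_ne_one hmod))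

lemma finrank_range_VU_case2 {N : ℕ} (hodd : Odd N) (hmod : N % 3 = 2) :
    Module.finrank ℚ (LinearMap.range (VU N)) = 0 := by
  have hb : LinearMap.range (VU N) = ⊥ := by
    rw [eq_bot_iff]
    rintro x ⟨q, rfl⟩
    rw [Submodule.mem_bot, VU_apply]
    exact UU_ev_case2 hodd hmod q.2
  rw [hb]
  exact finrank_bot ℚ F

lemma finrank_range_VU_ge {N : ℕ} {Q : R2} (hQ : Q ∈ UU N) (hne : evF Q ≠ 0) :
    1 ≤ Module.finrank ℚ (LinearMap.range (VU N)) := by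
  have hb : LinearMap.range (VU N) ≠ ⊥ := by
    intro h
    apply hne
    have : VU N ⟨Q, hQ⟩ ∈ LinearMap.range (VU N) := ⟨_, rfl⟩
    rw [h, Submodule.mem_bot] at this
    exact this
  have h0 : Module.finrank ℚ (LinearMap.range (VU N)) ≠ 0 :=
    fun h => hb (Submodule.finrank_eq_zero.mp h)
  omega

/-! ### Base case `N = 1` -/

lemma UU_one_eq_span : UU 1 = Submodule.span ℚ {g1} := by
  apply le_antisymm
  · intro Q hQ
    obtain ⟨h1, h2, _⟩ := mem_UU.mp hQ
    have hrep := hbF_surj h1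
    rw [hbF_apply, Fin.sum_univ_two] at hrep
    have hm0 : mdeg 1 (0 : Fin 2) = Finsupp.single 1 1 := by
      apply DFunLike.ext
      intro i
      fin_cases i <;> simp [mdeg, Finsupp.single_apply]
    have hm1 : mdeg 1 (1 : Fin 2) = Finsupp.single 0 1 := by
      apply DFunLike.ext
      intro i
      fin_cases i <;> simp [mdeg, Finsupp.single_apply]
    set a := coeff (mdeg 1 (0 : Fin 2)) Q with ha
    set b := coeff (mdeg 1 (1 : Fin 2)) Q with hb
    have hrep2 : C a * X 1 + C b * X 0 = Q := by
      rw [← hrep, hm0, hm1]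
      rw [← C_mul_X_pow_eq_monomial, ← C_mul_X_pow_eq_monomial, pow_one, pow_one]
    have hswap : swapA Q = C a * X 0 + C b * X 1 := by
      rw [← hrep2]
      simp only [map_add, map_mul, ← MvPolynomial.algebraMap_eq, AlgHom.commutes,
        swapA_X0, swapA_X1]
    have hba : b = -a := by
      rw [h2, ← hrep2] at hswap
      have hcoeff := congrArg (coeff (Finsupp.single 0 1)) hswap.symm
      simp only [coeff_add, coeff_neg, MvPolynomial.coeff_C_mul, coeff_X'] at hcoeff
      have hne : ¬ (Finsupp.single (1 : Fin 2) 1 = Finsupp.single 0 1) := by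
        intro hcon
        have := congrArg (fun d : Fin 2 →₀ ℕ => d 1) hcon
        simp [Finsupp.single_apply] at this
      simp [hne] at hcoeff
      linarith
    rw [Submodule.mem_span_singleton]
    refine ⟨b, ?_⟩
    rw [MvPolynomial.smul_eq_C_mul, g1, ← hrep2, hba]
    simp only [map_neg]
    ring
  · rw [Submodule.span_le, Set.singleton_subset_iff]
    exact g1_mem

lemma finrank_UU_one : Module.finrank ℚ (UU 1) = 1 := by
  rw [UU_one_eq_span]
  exact finrank_span_singleton g1_ne_zero

/-! ### The odd-dimension formula for `UU` -/

lemma finrank_UU_odd : ∀ N : ℕ, Odd N → Module.finrank ℚ (UU N) = N / 3 + 1 := by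
  intro N
  induction N using Nat.strong_induction_on with
  | _ N ih =>
    intro hodd
    have hN1 := Nat.odd_iff.mp hodd
    by_cases hbase : N = 1
    · subst hbase
      rw [finrank_UU_one]
    · have h3 : 3 ≤ N := by omega
      have hodd2 : Odd (N - 2) := by rw [Nat.odd_iff]; omega
      have hrec := LinearMap.finrank_range_add_finrank_ker (VU N)
      rw [finrank_ker_VU (by omega : 2 ≤ N), ih (N - 2) (by omega) hodd2] at hrec
      by_cases hm2 : N % 3 = 2
      · rw [finrank_range_VU_case2 hodd hm2] at hrec
        omega
      · have hub := finrank_range_VU_le hodd hm2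
        have hlb : 1 ≤ Module.finrank ℚ (LinearMap.range (VU N)) := by
          have hm01 : N % 3 = 0 ∨ N % 3 = 1 := by omega
          rcases hm01 with h | h
          · have hb : N = 6 * ((N - 3) / 6) + 3 := by omega
            have hw := dl_pow_mem g3_mem ((N - 3) / 6)
            rw [← hb] at hw
            apply finrank_range_VU_ge hw
            rw [map_mul, map_pow, evF_dl, one_pow, one_mul, evF_g3]
            exact mul_ne_zero om_ne_zero one_sub_om_ne_zero
          · have hb : N = 6 * ((N - 1) / 6) + 1 := by omega
            have hw := dl_pow_mem g1_mem ((N - 1) / 6)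
            rw [← hb] at hw
            apply finrank_range_VU_ge hw
            rw [map_mul, map_pow, evF_dl, one_pow, one_mul, evF_g1]
            exact one_sub_om_ne_zero
        have heq1 : Module.finrank ℚ (LinearMap.range (VU N)) = 1 :=
          le_antisymm hub hlb
        rw [heq1] at hrec
        omega

/-! ### Bridge to `FSh` -/

lemma algL_eq (p : R2) : algL p = algebraMap R2 K2 p := rfl

lemma algL_inj : Function.Injective (algebraMap R2 K2) := IsFractionRing.injective R2 K2

lemma algL_ne_zero {p : R2} (hp : p ≠ 0) : algebraMap R2 K2 p ≠ 0 := by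
  intro h
  exact hp (algL_inj (by rw [h, map_zero]))

lemma xy_ne_zero : (X 0 * X 1 : R2) ≠ 0 :=
  mul_ne_zero (MvPolynomial.X_ne_zero _) (MvPolynomial.X_ne_zero _)

lemma xyK_eq : xyK = algebraMap R2 K2 (X 0 * X 1) := rfl

lemma xyK_ne_zero : xyK ≠ 0 := algL_ne_zero xy_ne_zero

lemma liftK_algebraMap' (φ : R2 →ₐ[ℚ] R2) (hφ : Function.Injective φ) (p : R2) :
    liftK φ hφ (algebraMap R2 K2 p) = algebraMap R2 K2 (φ p) :=
  IsFractionRing.lift_algebraMap _ _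

lemma fayL_apply (x : K2) : fayL x = liftK fayA fayA_inj x := rfl
lemma rotL_apply (x : K2) : rotL x = liftK rotA rotA_inj x := rfl
lemma swapL_apply (x : K2) : swapL x = liftK swapA swapA_inj x := rfl

lemma lift_on_alg {P : K2} {Q : R2} (h : xyK * P = algebraMap R2 K2 Q)
    (φ : R2 →ₐ[ℚ] R2) (hφ : Function.Injective φ) :
    liftK φ hφ P * algebraMap R2 K2 (φ (X 0 * X 1)) = algebraMap R2 K2 (φ Q) := by
  rw [← liftK_algebraMap' φ hφ (X 0 * X 1), ← map_mul]
  have h2 : P * algebraMap R2 K2 (X 0 * X 1) = algebraMap R2 K2 Q := by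
    rw [mul_comm, ← xyK_eq]
    exact h
  rw [h2, liftK_algebraMap']

lemma key_swap {P : K2} {Q : R2} (h : xyK * P = algebraMap R2 K2 Q) :
    (P + swapL P) * xyK = algebraMap R2 K2 (Q + swapA Q) := by
  have h1 : swapL P * xyK = algebraMap R2 K2 (swapA Q) := by
    have h2 := lift_on_alg h swapA swapA_inj
    rw [show swapA (X 0 * X 1) = X 0 * X 1 from by
      rw [map_mul, swapA_X0, swapA_X1]; ring] at h2
    rw [swapL_apply, xyK_eq]
    exact h2
  rw [add_mul, h1, show P * xyK = algebraMap R2 K2 Q from by rw [mul_comm]; exact h,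
    map_add]

lemma key_fay {P : K2} {Q : R2} (h : xyK * P = algebraMap R2 K2 Q) :
    (P + fayL P + rotL P) * algebraMap R2 K2 (X 0 * X 1 * (X 0 + X 1)) =
      algebraMap R2 K2 ((X 0 + X 1) * Q - X 0 * fayA Q - X 1 * rotA Q) := by
  have hf := lift_on_alg h fayA fayA_inj
  have hr := lift_on_alg h rotA rotA_inj
  have ht1 : P * algebraMap R2 K2 (X 0 * X 1 * (X 0 + X 1))
      = algebraMap R2 K2 ((X 0 + X 1) * Q) := by
    have hd0 : algebraMap R2 K2 (X 0 * X 1 * (X 0 + X 1))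
        = algebraMap R2 K2 (X 0 * X 1) * algebraMap R2 K2 (X 0 + X 1) := by
      rw [← map_mul]
    rw [hd0, ← mul_assoc, show P * algebraMap R2 K2 (X 0 * X 1) = algebraMap R2 K2 Q
      from by rw [mul_comm, ← xyK_eq]; exact h, ← map_mul]
    congr 1
    ring
  have ht2 : fayL P * algebraMap R2 K2 (X 0 * X 1 * (X 0 + X 1))
      = algebraMap R2 K2 (-X 0 * fayA Q) := by
    have hd1 : algebraMap R2 K2 (X 0 * X 1 * (X 0 + X 1))
        = algebraMap R2 K2 (fayA (X 0 * X 1)) * algebraMap R2 K2 (-X 0) := by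
      rw [← map_mul]
      congr 1
      rw [map_mul, fayA_X0, fayA_X1]
      ring
    rw [hd1, ← mul_assoc, fayL_apply, hf, ← map_mul]
    congr 1
    ring
  have ht3 : rotL P * algebraMap R2 K2 (X 0 * X 1 * (X 0 + X 1))
      = algebraMap R2 K2 (-X 1 * rotA Q) := by
    have hd2 : algebraMap R2 K2 (X 0 * X 1 * (X 0 + X 1))
        = algebraMap R2 K2 (rotA (X 0 * X 1)) * algebraMap R2 K2 (-X 1) := by
      rw [← map_mul]
      congr 1
      rw [map_mul, rotA_X0, rotA_X1]
      ring
    rw [hd2, ← mul_assoc, rotL_apply, hr, ← map_mul]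
    congr 1
    ring
  rw [add_mul, add_mul, ht1, ht2, ht3, ← map_add, ← map_add]
  congr 1
  ring

def Phi : R2 →ₗ[ℚ] K2 := (LinearMap.mulLeft ℚ (xyK⁻¹)).comp algL

lemma Phi_apply (Q : R2) : Phi Q = xyK⁻¹ * algebraMap R2 K2 Q := rfl

lemma Phi_inj : Function.Injective Phi := by
  intro a b hab
  rw [Phi_apply, Phi_apply] at hab
  exact algL_inj (mul_left_cancel₀ (inv_ne_zero xyK_ne_zero) hab)

lemma xyK_mul_Phi (Q : R2) : xyK * Phi Q = algebraMap R2 K2 Q := by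
  rw [Phi_apply, ← mul_assoc, mul_inv_cancel₀ xyK_ne_zero, one_mul]

lemma FSh_eq_map (N : ℕ) : FSh N = Submodule.map Phi (UU N) := by
  apply le_antisymm
  · intro P hP
    rw [FSh, Submodule.mem_inf, Submodule.mem_inf] at hP
    obtain ⟨⟨hmem, hker1⟩, hker2⟩ := hP
    rw [Submodule.mem_comap] at hmem
    obtain ⟨Q, hQhs, hQeq⟩ := hmem
    have h : xyK * P = algebraMap R2 K2 Q := hQeq.symm
    have hker1' : P + fayL P + rotL P = 0 := by
      simpa using hker1
    have hker2' : P + swapL P = 0 := by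
      simpa using hker2
    have hfayQ : (X 0 + X 1) * Q = X 0 * fayA Q + X 1 * rotA Q := by
      have hk := key_fay h
      rw [hker1', zero_mul] at hk
      have hz : (X 0 + X 1) * Q - X 0 * fayA Q - X 1 * rotA Q = 0 := by
        apply algL_inj
        rw [map_zero]
        exact hk.symm
      linear_combination hz
    have hswQ : swapA Q = -Q := by
      have hk := key_swap h
      rw [hker2', zero_mul] at hk
      have hz : Q + swapA Q = 0 := by
        apply algL_inj
        rw [map_zero]
        exact hk.symm
      linear_combination hz
    refine ⟨Q, mem_UU.mpr ⟨hQhs, hswQ, hfayQ⟩, ?_⟩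
    have h2 := xyK_mul_Phi Q
    rw [← h] at h2
    exact mul_left_cancel₀ xyK_ne_zero h2
  · rintro P2 ⟨Q, hQU, rfl⟩
    obtain ⟨h1, h2, h3⟩ := mem_UU.mp hQU
    have h : xyK * Phi Q = algebraMap R2 K2 Q := xyK_mul_Phi Q
    rw [FSh, Submodule.mem_inf, Submodule.mem_inf]
    refine ⟨⟨?_, ?_⟩, ?_⟩
    · rw [Submodule.mem_comap]
      exact ⟨Q, h1, h.symm⟩
    · rw [LinearMap.mem_ker]
      have hk := key_fay h
      have hz : (X 0 + X 1) * Q - X 0 * fayA Q - X 1 * rotA Q = 0 := by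
        linear_combination h3
      rw [hz, map_zero] at hk
      have hd : algebraMap R2 K2 (X 0 * X 1 * (X 0 + X 1)) ≠ 0 :=
        algL_ne_zero (mul_ne_zero xy_ne_zero X0_add_X1_ne_zero)
      have hz2 := (mul_eq_zero.mp hk).resolve_right hd
      simpa using hz2
    · rw [LinearMap.mem_ker]
      have hk := key_swap h
      have hz : Q + swapA Q = 0 := by linear_combination h2
      rw [hz, map_zero] at hk
      have hz2 := (mul_eq_zero.mp hk).resolve_right xyK_ne_zero
      simpa using hz2

lemma finrank_FSh_eq (N : ℕ) :
    Module.finrank ℚ (FSh N) = Module.finrank ℚ (UU N) := by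
  rw [FSh_eq_map N]
  exact ((Submodule.equivMapOfInjective Phi Phi_inj (UU N)).finrank_eq).symm

end FayAux


/-- The dimension of the length-two Fay-shuffle space `FSh₂(N)` equals `0` if `N`
is even and `⌊N/3⌋ + 1` if `N` is odd. -/
theorem dim_FSh (N : ℕ) :
    Module.finrank ℚ ↥(FSh N) = if Even N then 0 else N / 3 + 1 := by
  rw [FayAux.finrank_FSh_eq N]
  rcases Nat.even_or_odd N with he | ho
  · rw [if_pos he, FayAux.UU_even he, finrank_bot]
  · rw [if_neg (by simpa using Nat.not_even_iff_odd.mpr ho), FayAux.finrank_UU_odd N ho]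

end
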